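/- For n ≥ 5, the eccentricity matrix E(W_n) of the wheel graph on n vertices is invertible if and only if n ≢ 1 (mod 3). -/

import Mathlib

open Matrix

noncomputable section

/-- Tridiagonal matrix of order `m` with `a` on the diagonal, `b` on the superdiagonal
and `c` on the subdiagonal. -/
def tridiag {R : Type*} [Zero R] (m : ℕ) (a b c : R) : Matrix (Fin m) (Fin m) R :=
  Matrix.of fun i j =>
    if (i : ℕ) = (j : ℕ) then a
    else if (j : ℕ) = (i : ℕ) + 1 then b
    else if (i : ℕ) = (j : ℕ) + 1 then c
    else 0

/-- The bordered matrix `[[0, e'],[e, A]]` where `e` is the all-ones vector. -/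
def border {R : Type*} [Zero R] [One R] {m : ℕ} (A : Matrix (Fin m) (Fin m) R) :
    Matrix (Fin (m + 1)) (Fin (m + 1)) R :=
  Matrix.of fun i j =>
    if hi : i = 0 then (if j = 0 then 0 else 1)
    else if hj : j = 0 then 1
    else A (i.pred hi) (j.pred hj)

/-- The circulant matrix whose first row is `c`, each subsequent row the cyclic
right shift of the previous one. -/
def circ {R : Type*} {m : ℕ} (c : Fin m → R) : Matrix (Fin m) (Fin m) R :=
  Matrix.of fun i j => c (j - i)

/-- The eccentricity matrix of the wheel graph `W_n` (hub is vertex `0`, cycle vertices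
`1, …, n-1`): `E(W_n) = [[0, e'],[e, circ(0,0,2,…,2,0)]]`. -/
def EW (n : ℕ) : Matrix (Fin n) (Fin n) ℝ :=
  Matrix.of fun i j =>
    if i = j then 0
    else if (i : ℕ) = 0 ∨ (j : ℕ) = 0 then 1
    else if ((j : ℕ) : ZMod (n - 1)) - ((i : ℕ) : ZMod (n - 1)) = 1
            ∨ ((i : ℕ) : ZMod (n - 1)) - ((j : ℕ) : ZMod (n - 1)) = 1 then 0
    else 2

namespace WheelAux

variable (m : ℕ) [NeZero m]

/-- The canonical bijection from `ZMod m` onto the nonzero vertices of `Fin (m+1)`. -/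
def iota (k : ZMod m) : Fin (m + 1) :=
  if k = 0 then ⟨m, Nat.lt_succ_self m⟩
  else ⟨k.val, Nat.lt_succ_of_lt (ZMod.val_lt k)⟩

lemma iota_ne_zero (k : ZMod m) : iota m k ≠ 0 := by
  unfold iota
  split
  · intro h
    exact NeZero.ne m (by simpa [Fin.ext_iff] using h)
  · rename_i hk
    intro h
    have : k.val = 0 := by simpa [Fin.ext_iff] using h
    exact hk ((ZMod.val_eq_zero k).mp this)

lemma cast_iota (k : ZMod m) : (((iota m k : Fin (m+1)) : ℕ) : ZMod m) = k := by
  unfold iota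
  split
  · rename_i hk; simp [hk]
  · simp

lemma iota_injective : Function.Injective (iota m) := by
  intro k l h
  have := congrArg (fun j : Fin (m+1) => (((j : ℕ)) : ZMod m)) h
  simpa [cast_iota] using this

lemma iota_spec (j : Fin (m+1)) (hj : j ≠ 0) : iota m (((j : ℕ) : ZMod m)) = j := by
  have hj0 : (j : ℕ) ≠ 0 := fun h => hj (Fin.ext h)
  have hjm : (j : ℕ) ≤ m := Nat.lt_succ_iff.mp j.isLt
  rcases eq_or_lt_of_le hjm with hEq | hlt
  · have : ((j : ℕ) : ZMod m) = 0 := by rw [hEq]; exact ZMod.natCast_self m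
    rw [this]
    unfold iota
    rw [if_pos rfl]
    exact Fin.ext (by simp [hEq])
  · have hv : (((j : ℕ) : ZMod m)).val = (j : ℕ) := ZMod.val_natCast_of_lt hlt
    have hne : ((j : ℕ) : ZMod m) ≠ 0 := by
      intro h0; rw [h0, ZMod.val_zero] at hv; exact hj0 hv.symm
    unfold iota
    rw [if_neg hne]
    exact Fin.ext (by simp [hv])

lemma sum_split (f : Fin (m+1) → ℝ) :
    ∑ j, f j = f 0 + ∑ k : ZMod m, f (iota m k) := by
  rw [← Finset.add_sum_erase _ f (Finset.mem_univ 0)]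
  congr 1
  refine Finset.sum_nbij' (i := fun j : Fin (m+1) => (((j : ℕ)) : ZMod m))
    (j := fun k => iota m k) ?_ ?_ ?_ ?_ ?_
  · intro a ha
    exact Finset.mem_univ _
  · intro k _
    exact Finset.mem_erase.mpr ⟨iota_ne_zero m k, Finset.mem_univ _⟩
  · intro a ha
    exact iota_spec m a (Finset.mem_erase.mp ha).1
  · intro k _
    exact cast_iota m k
  · intro a ha
    rw [iota_spec m a (Finset.mem_erase.mp ha).1]

lemma EW_zero_zero : EW (m+1) 0 0 = 0 := by simp [EW]

lemma EW_zero_left (j : Fin (m+1)) (hj : j ≠ 0) : EW (m+1) 0 j = 1 := by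
  simp only [EW, Matrix.of_apply]
  rw [if_neg (fun h => hj h.symm), if_pos (Or.inl (by simp))]

lemma EW_zero_right (i : Fin (m+1)) (hi : i ≠ 0) : EW (m+1) i 0 = 1 := by
  simp only [EW, Matrix.of_apply]
  rw [if_neg hi, if_pos (Or.inr (by simp))]

lemma EW_iota (k l : ZMod m) :
    EW (m+1) (iota m k) (iota m l) =
      if l = k ∨ l = k + 1 ∨ l = k - 1 then 0 else 2 := by
  simp only [EW, Matrix.of_apply]
  have hk0 : ((iota m k : ℕ)) ≠ 0 := fun h => iota_ne_zero m k (Fin.ext h)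
  have hl0 : ((iota m l : ℕ)) ≠ 0 := fun h => iota_ne_zero m l (Fin.ext h)
  have hck : (((iota m k : ℕ)) : ZMod ((m+1) - 1)) = k := cast_iota m k
  have hcl : (((iota m l : ℕ)) : ZMod ((m+1) - 1)) = l := cast_iota m l
  rcases eq_or_ne l k with rfl | hlk
  · rw [if_pos rfl, if_pos (Or.inl rfl)]
  · rw [if_neg (fun h => hlk (iota_injective m h).symm),
      if_neg (by push_neg; exact ⟨hk0, hl0⟩)]
    rw [hck, hcl]
    by_cases h : l = k + 1 ∨ l = k - 1
    · rw [if_pos (by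
        rcases h with h | h
        · exact Or.inl (by rw [h]; ring)
        · exact Or.inr (by rw [h]; ring)),
        if_pos (Or.inr h)]
    · push_neg at h
      rw [if_neg (by
        push_neg
        constructor
        · intro heq; exact h.1 (by linear_combination heq)
        · intro heq; exact h.2 (by linear_combination -heq)),
        if_neg (by push_neg; exact ⟨hlk, h.1, h.2⟩)]

lemma mulVec_zero_row (v : Fin (m+1) → ℝ) :
    (EW (m+1)).mulVec v 0 = ∑ k : ZMod m, v (iota m k) := by
  show ∑ j, EW (m+1) 0 j * v j = _
  rw [sum_split m (fun j => EW (m+1) 0 j * v j), EW_zero_zero]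
  simp only [zero_mul, zero_add]
  exact Finset.sum_congr rfl fun k _ => by
    rw [EW_zero_left m _ (iota_ne_zero m k), one_mul]

lemma one_ne_zero' (hm : 3 ≤ m) : (1 : ZMod m) ≠ 0 := by
  intro h
  have := congrArg ZMod.val h
  rw [show (1 : ZMod m) = ((1 : ℕ) : ZMod m) by simp,
    ZMod.val_natCast_of_lt (by omega), ZMod.val_zero] at this
  omega

lemma two_ne_zero' (hm : 3 ≤ m) : (2 : ZMod m) ≠ 0 := by
  intro h
  have := congrArg ZMod.val h
  rw [show (2 : ZMod m) = ((2 : ℕ) : ZMod m) by push_cast; ring,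
    ZMod.val_natCast_of_lt (by omega), ZMod.val_zero] at this
  omega

lemma mulVec_iota_row (hm : 3 ≤ m) (v : Fin (m+1) → ℝ) (k : ZMod m) :
    (EW (m+1)).mulVec v (iota m k) =
      v 0 + (∑ l : ZMod m, 2 * v (iota m l))
        - 2 * v (iota m k) - 2 * v (iota m (k+1)) - 2 * v (iota m (k-1)) := by
  have hne1 : k + 1 ≠ k := by
    intro h; exact one_ne_zero' m hm (by linear_combination h)
  have hne2 : k - 1 ≠ k := by
    intro h; exact one_ne_zero' m hm (by linear_combination -h)
  have hne3 : k + 1 ≠ k - 1 := by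
    intro h; exact two_ne_zero' m hm (by linear_combination h)
  set w : ZMod m → ℝ := fun l => v (iota m l) with hw
  show ∑ j, EW (m+1) (iota m k) j * v j = _
  rw [sum_split m (fun j => EW (m+1) (iota m k) j * v j),
    EW_zero_right m _ (iota_ne_zero m k), one_mul]
  have key : ∀ l : ZMod m,
      EW (m+1) (iota m k) (iota m l) * v (iota m l)
        = 2 * w l - ((if l = k then 2 * w k else 0) + (if l = k + 1 then 2 * w (k+1) else 0)
            + (if l = k - 1 then 2 * w (k-1) else 0)) := by
    intro l
    rw [EW_iota]
    by_cases h1 : l = k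
    · subst h1
      rw [if_pos (Or.inl rfl), if_pos rfl, if_neg (fun h => hne1 h.symm),
        if_neg (fun h => hne2 h.symm)]
      ring
    · by_cases h2 : l = k + 1
      · subst h2
        rw [if_pos (Or.inr (Or.inl rfl)), if_neg h1, if_pos rfl, if_neg hne3]
        ring
      · by_cases h3 : l = k - 1
        · subst h3
          rw [if_pos (Or.inr (Or.inr rfl)), if_neg h1, if_neg (fun h => hne3 h.symm),
            if_pos rfl]
          ring
        · rw [if_neg (by push_neg; exact ⟨h1, h2, h3⟩), if_neg h1, if_neg h2, if_neg h3]
          ring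
  rw [Finset.sum_congr rfl (fun l _ => key l)]
  rw [Finset.sum_sub_distrib, Finset.sum_add_distrib, Finset.sum_add_distrib]
  simp only [Finset.sum_ite_eq', Finset.mem_univ, if_pos]
  ring

end WheelAux

open WheelAux in
theorem stmt5 (n : ℕ) (h : 5 ≤ n) :
    IsUnit (EW n) ↔ n % 3 ≠ 1 := by
  obtain ⟨m, rfl⟩ : ∃ m, n = m + 1 := ⟨n - 1, by omega⟩
  have hm : 3 ≤ m := by omega
  have : NeZero m := ⟨by omega⟩
  rw [Matrix.isUnit_iff_isUnit_det, isUnit_iff_ne_zero]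
  constructor
  · -- invertible → n % 3 ≠ 1
    intro hdet hmod
    have h3 : 3 ∣ m := by omega
    apply hdet
    rw [← Matrix.exists_mulVec_eq_zero_iff]
    set u : ZMod 3 → ℝ := fun x => if x = 1 then 1 else 0 with hu
    set c : ZMod 3 → ℝ := fun x => u (x + 1) - u x with hc
    have htri3 : ∀ x : ZMod 3, c x + c (x + 1) + c (x - 1) = 0 := by
      intro x
      show (u (x+1) - u x) + (u (x+1+1) - u (x+1)) + (u (x-1+1) - u (x-1)) = 0
      have hz3 : (3 : ZMod 3) = 0 := by decide
      have h1 : x + 1 + 1 = x - 1 := by linear_combination hz3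
      have h2 : x - 1 + 1 = x := by ring
      rw [h1, h2]; ring
    have hc0 : c 0 = 1 := by
      simp only [hc, hu, zero_add, if_neg (show (0:ZMod 3) ≠ 1 by decide)]
      norm_num
    set χ : ZMod m →+* ZMod 3 := ZMod.castHom h3 (ZMod 3) with hχ
    set w : ZMod m → ℝ := fun k => c (χ k) with hwdef
    have hχadd : ∀ k : ZMod m, χ (k + 1) = χ k + 1 := by
      intro k; rw [map_add, RingHom.map_one]
    have hsum : ∑ k : ZMod m, w k = 0 := by
      have e1 : ∑ k : ZMod m, u (χ (k + 1)) = ∑ k : ZMod m, u (χ k) :=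
        Fintype.sum_equiv (Equiv.addRight (1 : ZMod m)) _ _ (fun k => rfl)
      calc ∑ k : ZMod m, w k
          = ∑ k : ZMod m, (u (χ (k + 1)) - u (χ k)) := by
            refine Finset.sum_congr rfl fun k _ => ?_
            show u (χ k + 1) - u (χ k) = u (χ (k + 1)) - u (χ k)
            rw [hχadd k]
        _ = 0 := by rw [Finset.sum_sub_distrib, e1, sub_self]
    have htri : ∀ k : ZMod m, w k + w (k + 1) + w (k - 1) = 0 := by
      intro k
      show c (χ k) + c (χ (k + 1)) + c (χ (k - 1)) = 0
      rw [hχadd k, show χ (k - 1) = χ k - 1 from by rw [map_sub, RingHom.map_one]]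
      exact htri3 (χ k)
    set v : Fin (m+1) → ℝ := fun j => if j = 0 then 0 else w (((j : ℕ)) : ZMod m) with hv
    have hv0 : v 0 = 0 := by simp [hv]
    have hvi : ∀ k : ZMod m, v (iota m k) = w k := by
      intro k
      rw [hv]
      simp only [if_neg (iota_ne_zero m k), cast_iota]
    refine ⟨v, ?_, ?_⟩
    · intro h0
      have h1 : v (iota m 0) = 0 := by rw [h0]; rfl
      rw [hvi 0] at h1
      have h2 : c (χ 0) = 0 := h1
      rw [(map_zero χ : χ 0 = 0), hc0] at h2
      norm_num at h2
    · funext j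
      rcases eq_or_ne j 0 with rfl | hj
      · rw [mulVec_zero_row]
        simp only [hvi]
        simpa using hsum
      · rw [← iota_spec m j hj, mulVec_iota_row m hm]
        simp only [hvi, hv0]
        have hs2 : ∑ l : ZMod m, 2 * w l = 2 * ∑ l : ZMod m, w l := by
          rw [Finset.mul_sum]
        have := htri (((j : ℕ)) : ZMod m)
        simp only [Pi.zero_apply]
        rw [hs2, hsum]
        linarith
  · -- n % 3 ≠ 1 → invertible
    intro hmod hdet
    have h3 : ¬ (3 ∣ m) := by omega
    obtain ⟨v, hv, hMv⟩ := (Matrix.exists_mulVec_eq_zero_iff).mpr hdet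
    set w : ZMod m → ℝ := fun k => v (iota m k) with hw
    have hrow0 : ∑ k : ZMod m, w k = 0 := by
      have := congrFun hMv 0
      rw [mulVec_zero_row] at this
      exact this
    have hSk : ∀ k : ZMod m, v 0 = 2 * w k + 2 * w (k + 1) + 2 * w (k - 1) := by
      intro k
      have := congrFun hMv (iota m k)
      rw [mulVec_iota_row m hm] at this
      have hs2 : ∑ l : ZMod m, 2 * w l = 2 * ∑ l : ZMod m, w l := by
        rw [Finset.mul_sum]
      simp only [Pi.zero_apply] at this
      rw [hs2, hrow0] at this
      linarith
    have hper : ∀ k : ZMod m, w (k + 3) = w k := by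
      intro k
      have h1 := hSk (k + 1)
      have h2 := hSk (k + 2)
      rw [show k + 1 + 1 = k + 2 by ring, show k + 1 - 1 = k by ring] at h1
      rw [show k + 2 + 1 = k + 3 by ring, show k + 2 - 1 = k + 1 by ring] at h2
      linarith
    have hperN : ∀ (j : ℕ) (k : ZMod m), w (k + 3 * (j : ZMod m)) = w k := by
      intro j
      induction j with
      | zero => intro k; simp
      | succ j ih =>
        intro k
        have : k + 3 * ((j + 1 : ℕ) : ZMod m) = (k + 3) + 3 * (j : ZMod m) := by
          push_cast; ring
        rw [this, ih (k + 3), hper k]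
    have hunit : IsUnit (3 : ZMod m) := by
      have hcop : Nat.Coprime 3 m := (Nat.Prime.coprime_iff_not_dvd Nat.prime_three).mpr h3
      have := (ZMod.isUnit_iff_coprime 3 m).mpr hcop
      simpa using this
    have hconst : ∀ k : ZMod m, w k = w 0 := by
      intro k
      have hval : ((((3 : ZMod m)⁻¹ * k).val : ℕ) : ZMod m) = (3 : ZMod m)⁻¹ * k := by
        simp [ZMod.natCast_val, ZMod.cast_id]
      have := hperN (((3 : ZMod m)⁻¹ * k).val) 0
      rw [hval, zero_add, ← mul_assoc, ZMod.mul_inv_of_unit _ hunit, one_mul] at this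
      exact this
    have hw0 : w 0 = 0 := by
      have : ∑ k : ZMod m, w k = (m : ℝ) * w 0 := by
        rw [Finset.sum_congr rfl (fun k _ => hconst k), Finset.sum_const,
          Finset.card_univ, ZMod.card, nsmul_eq_mul]
      rw [hrow0] at this
      have hm0 : (m : ℝ) ≠ 0 := Nat.cast_ne_zero.mpr (NeZero.ne m)
      field_simp at this
      exact (mul_eq_zero.mp this.symm).resolve_left hm0
    have hv00 : v 0 = 0 := by
      have := hSk 0
      rw [hconst (0 + 1), hconst (0 - 1), hw0] at this
      linarith
    apply hv
    funext j
    rcases eq_or_ne j 0 with rfl | hj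
    · exact hv00
    · have : v j = w (((j : ℕ)) : ZMod m) :=
        (congrArg v (iota_spec m j hj)).symm
      rw [this, hconst, hw0]
      rfl
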